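/- The function y(t) = e^{-t²} is a positive, decreasing solution of the linear delay equation y''(t) = p(t) y(t-1) on ℝ, where p(t) = (4t² - 2) e^{1-2t}; moreover lim_{t→∞} t² p(t) = 0, and y is not regularly varying of any index (indeed y(λt)/y(t) → 0 for every λ > 1). -/

import Mathlib

open Filter Real

lemma hd1 (t : ℝ) : HasDerivAt (fun s : ℝ => Real.exp (-s ^ 2))
    (Real.exp (-t ^ 2) * (-(2 * t))) t := by
  have h : HasDerivAt (fun s : ℝ => -s ^ 2) (-(2 * t)) t := by
    simpa [Pi.neg_def] using (hasDerivAt_pow 2 t).neg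
  simpa [Function.comp_def] using (Real.hasDerivAt_exp (-t ^ 2)).comp t h

lemma deriv1_eq : deriv (fun s : ℝ => Real.exp (-s ^ 2))
    = fun t : ℝ => Real.exp (-t ^ 2) * (-(2 * t)) := by
  funext t; exact (hd1 t).deriv

lemma hd2 (t : ℝ) : HasDerivAt (fun s : ℝ => Real.exp (-s ^ 2) * (-(2 * s)))
    ((4 * t ^ 2 - 2) * Real.exp (-t ^ 2)) t := by
  have h : HasDerivAt (fun s : ℝ => -(2 * s)) (-2) t := by
    simpa [Pi.neg_def] using ((hasDerivAt_id t).const_mul (2 : ℝ)).neg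
  have : HasDerivAt (fun s : ℝ => Real.exp (-s ^ 2) * (-(2 * s))) _ t := (hd1 t).mul h
  convert this using 1
  ring

lemma exp_decay (n : ℕ) : Tendsto (fun t : ℝ => t ^ n * Real.exp (-(2 * t)))
    atTop (nhds 0) := by
  have h : Tendsto (fun x : ℝ => x ^ n * Real.exp (-x)) atTop (nhds 0) :=
    tendsto_pow_mul_exp_neg_atTop_nhds_zero n
  have h2 : Tendsto (fun t : ℝ => (2 * t) ^ n * Real.exp (-(2 * t))) atTop (nhds 0) :=
    h.comp (tendsto_id.const_mul_atTop two_pos)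
  have h3 := h2.div_const ((2 : ℝ) ^ n)
  simp only [zero_div] at h3
  convert h3 using 2 with t
  field_simp
  ring

theorem decreasing_solution_not_rv :
    (∀ t : ℝ, 0 < Real.exp (-t ^ 2)) ∧
    StrictAntiOn (fun t : ℝ => Real.exp (-t ^ 2)) (Set.Ici 0) ∧
    (∀ t : ℝ, deriv (deriv (fun s : ℝ => Real.exp (-s ^ 2))) t
        = ((4 * t ^ 2 - 2) * Real.exp (1 - 2 * t)) * Real.exp (-(t - 1) ^ 2)) ∧
    Tendsto (fun t : ℝ => t ^ 2 * ((4 * t ^ 2 - 2) * Real.exp (1 - 2 * t)))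
      atTop (nhds 0) ∧
    (∀ l : ℝ, 1 < l →
      Tendsto (fun t : ℝ => Real.exp (-(l * t) ^ 2) / Real.exp (-t ^ 2))
        atTop (nhds 0)) := by
  refine ⟨fun t => Real.exp_pos _, ?_, ?_, ?_, ?_⟩
  · intro a ha b hb hab
    have : -b ^ 2 < -a ^ 2 := by nlinarith [Set.mem_Ici.mp ha]
    exact Real.exp_lt_exp.mpr this
  · intro t
    rw [deriv1_eq, (hd2 t).deriv, mul_assoc, ← Real.exp_add,
      show (1 : ℝ) - 2 * t + -(t - 1) ^ 2 = -t ^ 2 by ring]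
  · have key : ∀ t : ℝ, t ^ 2 * ((4 * t ^ 2 - 2) * Real.exp (1 - 2 * t))
        = Real.exp 1 * (4 * (t ^ 4 * Real.exp (-(2 * t))) - 2 * (t ^ 2 * Real.exp (-(2 * t)))) := by
      intro t
      rw [show (1 : ℝ) - 2 * t = 1 + -(2 * t) by ring, Real.exp_add]
      ring
    simp only [key]
    have := ((exp_decay 4).const_mul 4).sub ((exp_decay 2).const_mul 2)
    simpa using this.const_mul (Real.exp 1)
  · intro l hl
    have h1 : ∀ t : ℝ, Real.exp (-(l * t) ^ 2) / Real.exp (-t ^ 2)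
        = Real.exp (-((l ^ 2 - 1) * t ^ 2)) := by
      intro t
      rw [← Real.exp_sub]
      congr 1; ring
    simp only [h1]
    apply Real.tendsto_exp_atBot.comp
    apply tendsto_neg_atBot_iff.mpr
    have hc : 0 < l ^ 2 - 1 := by nlinarith
    exact (tendsto_pow_atTop (by norm_num)).const_mul_atTop hc
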